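/- For all n < N < ⌊5n/2⌋ − 1, the n × N 0-1 matrix R^{(n,N)} defined below satisfies st(R^{(n,N)}) = ⌈(2n+N−2)/3⌉; consequently st(n,N) ≤ ⌈(2n+N−2)/3⌉ in this range. -/

import Mathlib

/-- A step of a staircase: the next position is strictly to the right in the
same row, or strictly below in the same column. -/
def Step {n N : ℕ} (p q : Fin n × Fin N) : Prop :=
  (p.1 = q.1 ∧ p.2 < q.2) ∨ (p.2 = q.2 ∧ p.1 < q.1)

/-- A `v`-staircase in the 0-1 matrix `M`: a sequence of positions all holding
the value `v`, each successive one strictly to the right in the same row or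
strictly below in the same column of the previous one. -/
def IsStaircase {n N : ℕ} (M : Fin n → Fin N → Fin 2) (v : Fin 2)
    (L : List (Fin n × Fin N)) : Prop :=
  (∀ p ∈ L, M p.1 p.2 = v) ∧ L.Chain' Step

/-- The matrix R^(n,N) (1-based indices i, j): R_(i,j) = 1 iff
(1) i ≤ ⌈n/2⌉ and i+j ≤ ⌊(N−n+2)/3⌋+1, or
(2) i ≤ ⌈n/2⌉ and i+j > ⌊(N−n+2)/3⌋ + ⌈(2n+N−2)/3⌉ + 1, or
(3) i > ⌈n/2⌉ and n + ⌊(N−n+2)/3⌋ < i+j ≤ n + N − ⌈(N−n−1)/3⌉. -/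
def Rmat (n N : ℕ) : Fin n → Fin N → Fin 2 := fun i j =>
  if (i.1 + 1 ≤ (n + 1) / 2 ∧ (i.1 + 1) + (j.1 + 1) ≤ (N - n + 2) / 3 + 1) ∨
     (i.1 + 1 ≤ (n + 1) / 2 ∧
       (N - n + 2) / 3 + (2 * n + N - 2 + 2) / 3 + 1 < (i.1 + 1) + (j.1 + 1)) ∨
     ((n + 1) / 2 < i.1 + 1 ∧
       n + (N - n + 2) / 3 < (i.1 + 1) + (j.1 + 1) ∧
       (i.1 + 1) + (j.1 + 1) ≤ n + N - (N - n - 1 + 2) / 3)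
  then 1 else 0

/-- `stMax M`: the maximum length of a homogeneous (0- or 1-) staircase in `M`. -/
noncomputable def stMax {n N : ℕ} (M : Fin n → Fin N → Fin 2) : ℕ :=
  sSup {l : ℕ | ∃ (v : Fin 2) (L : List (Fin n × Fin N)),
    IsStaircase M v L ∧ L.length = l}


lemma nat_list_len (S : List ℕ) (lo k : ℕ) (h1 : ∀ x ∈ S, lo ≤ x ∧ x < lo + k)
    (h2 : S.Chain' (· < ·)) : S.length ≤ k := by
  have hp : S.Pairwise (· < ·) := List.isChain_iff_pairwise.mp h2
  have hnd : S.Nodup := hp.imp (fun h => Nat.ne_of_lt h)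
  have hsub : S.toFinset ⊆ Finset.Ico lo (lo + k) := by
    intro x hx
    rw [List.mem_toFinset] at hx
    have := h1 x hx
    simp only [Finset.mem_Ico]
    omega
  calc S.length = S.toFinset.card := (List.toFinset_card_of_nodup hnd).symm
    _ ≤ (Finset.Ico lo (lo + k)).card := Finset.card_le_card hsub
    _ = k := by simp

lemma chain'_transfer {α : Type*} {R S : α → α → Prop} {P : α → Prop}
    (h : ∀ a b, P a → P b → R a b → S a b) :
    ∀ L : List α, (∀ x ∈ L, P x) → L.Chain' R → L.Chain' S := by
  intro L
  induction L with
  | nil => intro _ _; exact List.isChain_nil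
  | cons a t ih =>
    intro hm hc
    cases t with
    | nil => exact List.isChain_singleton a
    | cons b t' =>
      simp only [List.Chain', List.isChain_cons_cons] at hc ⊢
      exact ⟨h a b (hm a (by simp)) (hm b (by simp)) hc.1,
        ih (fun x hx => hm x (by simp [hx])) hc.2⟩

lemma Rmat_one {n N : ℕ} {i : Fin n} {j : Fin N} (h : Rmat n N i j = 1) :
    (i.1 + 1 ≤ (n + 1) / 2 ∧ (i.1 + 1) + (j.1 + 1) ≤ (N - n + 2) / 3 + 1) ∨
     (i.1 + 1 ≤ (n + 1) / 2 ∧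
       (N - n + 2) / 3 + (2 * n + N - 2 + 2) / 3 + 1 < (i.1 + 1) + (j.1 + 1)) ∨
     ((n + 1) / 2 < i.1 + 1 ∧
       n + (N - n + 2) / 3 < (i.1 + 1) + (j.1 + 1) ∧
       (i.1 + 1) + (j.1 + 1) ≤ n + N - (N - n - 1 + 2) / 3) := by
  unfold Rmat at h
  split at h
  · assumption
  · exact absurd h (by decide)

lemma Rmat_zero {n N : ℕ} {i : Fin n} {j : Fin N} (h : Rmat n N i j = 0) :
    ¬((i.1 + 1 ≤ (n + 1) / 2 ∧ (i.1 + 1) + (j.1 + 1) ≤ (N - n + 2) / 3 + 1) ∨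
     (i.1 + 1 ≤ (n + 1) / 2 ∧
       (N - n + 2) / 3 + (2 * n + N - 2 + 2) / 3 + 1 < (i.1 + 1) + (j.1 + 1)) ∨
     ((n + 1) / 2 < i.1 + 1 ∧
       n + (N - n + 2) / 3 < (i.1 + 1) + (j.1 + 1) ∧
       (i.1 + 1) + (j.1 + 1) ≤ n + N - (N - n - 1 + 2) / 3)) := by
  unfold Rmat at h
  split at h
  · exact absurd h (by decide)
  · assumption

lemma Rmat_eq_zero {n N : ℕ} {i : Fin n} {j : Fin N}
    (h : ¬((i.1 + 1 ≤ (n + 1) / 2 ∧ (i.1 + 1) + (j.1 + 1) ≤ (N - n + 2) / 3 + 1) ∨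
     (i.1 + 1 ≤ (n + 1) / 2 ∧
       (N - n + 2) / 3 + (2 * n + N - 2 + 2) / 3 + 1 < (i.1 + 1) + (j.1 + 1)) ∨
     ((n + 1) / 2 < i.1 + 1 ∧
       n + (N - n + 2) / 3 < (i.1 + 1) + (j.1 + 1) ∧
       (i.1 + 1) + (j.1 + 1) ≤ n + N - (N - n - 1 + 2) / 3))) : Rmat n N i j = 0 := by
  unfold Rmat
  exact if_neg h

set_option maxHeartbeats 2000000 in
/-- For n < N < ⌊5n/2⌋ − 1, the maximum homogeneous staircase length in
R^(n,N) is exactly ⌈(2n+N−2)/3⌉; consequently st(n,N) ≤ ⌈(2n+N−2)/3⌉. -/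
theorem stmt8 (n N : ℕ) (hnN : n < N) (hN : N < 5 * n / 2 - 1) :
    IsGreatest {l : ℕ | ∃ (v : Fin 2) (L : List (Fin n × Fin N)),
        IsStaircase (Rmat n N) v L ∧ L.length = l} ((2 * n + N - 2 + 2) / 3) ∧
    sInf {s : ℕ | ∃ M : Fin n → Fin N → Fin 2, stMax M = s}
      ≤ (2 * n + N - 2 + 2) / 3 := by
  have hn2 : 2 ≤ n := by omega
  have hN' : 2 * N + 4 ≤ 5 * n := by omega
  obtain ⟨A, hA⟩ : ∃ A, A = (N - n + 2) / 3 := ⟨_, rfl⟩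
  obtain ⟨C, hC⟩ : ∃ C, C = (N - n - 1 + 2) / 3 := ⟨_, rfl⟩
  obtain ⟨H, hH⟩ : ∃ H, H = (n + 1) / 2 := ⟨_, rfl⟩
  obtain ⟨K, hK⟩ : ∃ K, K = (2 * n + N - 2 + 2) / 3 := ⟨_, rfl⟩
  have hA' : 3 * A ≤ N - n + 2 ∧ N - n + 2 < 3 * A + 3 := by omega
  have hC' : 3 * C ≤ N - n + 1 ∧ N - n + 1 < 3 * C + 3 := by omega
  have hH' : 2 * H ≤ n + 1 ∧ n + 1 < 2 * H + 2 := by omega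
  have hK' : 3 * K ≤ 2 * n + N ∧ 2 * n + N < 3 * K + 3 := by omega
  rw [← hK]
  obtain ⟨hA1, hA2⟩ := hA'
  obtain ⟨hC1, hC2⟩ := hC'
  obtain ⟨hH1, hH2⟩ := hH'
  obtain ⟨hK1, hK2⟩ := hK'
  have hACK : A + C + K = N := by omega
  have hAH : A ≤ H := by omega
  have hAd : A + n ≤ K + 1 := by omega
  have hCd : C + n ≤ K + 1 := by omega
  have hKn : n ≤ K := by omega
  have hHNK : H + N ≤ 2 * K + 1 := by omega
  -- membership: a staircase of 0's in row 0, columns A .. A+K-1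
  have hmem : K ∈ {l : ℕ | ∃ (v : Fin 2) (L : List (Fin n × Fin N)),
      IsStaircase (Rmat n N) v L ∧ L.length = l} := by
    refine ⟨0, List.ofFn (fun t : Fin K =>
      ((⟨0, by omega⟩ : Fin n), (⟨A + t.1, by have := t.isLt; omega⟩ : Fin N))),
      ⟨?_, ?_⟩, by simp⟩
    · intro p hp
      rw [List.mem_ofFn] at hp
      obtain ⟨t, rfl⟩ := hp
      refine Rmat_eq_zero ?_
      dsimp only
      have := t.isLt
      omega
    · rw [List.Chain', List.isChain_iff_getElem]
      intro t ht
      simp only [List.getElem_ofFn, List.length_ofFn] at ht ⊢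
      left
      constructor
      · rfl
      · rw [Fin.lt_def]
        simp
  -- upper bound
  have hub : ∀ l ∈ {l : ℕ | ∃ (v : Fin 2) (L : List (Fin n × Fin N)),
      IsStaircase (Rmat n N) v L ∧ L.length = l}, l ≤ K := by
    rintro l ⟨v, L, ⟨hval, hchain⟩, rfl⟩
    fin_cases v
    · -- 0-staircase
      set φ : Fin n × Fin N → ℕ := fun p =>
        if n + N ≤ p.1.1 + p.2.1 + C + 1
        then p.1.1 + p.2.1 + A + C - N
        else p.1.1 + p.2.1 with hφ
      have hlen := nat_list_len (L.map φ) A K ?_ ?_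
      · simpa using hlen
      · intro x hx
        rw [List.mem_map] at hx
        obtain ⟨p, hp, rfl⟩ := hx
        have hc := Rmat_zero (hval p hp)
        rw [← hA, ← hC, ← hH, ← hK] at hc
        have hi := p.1.isLt; have hj := p.2.isLt
        clear hA hC hH hK hN
        simp only [hφ]
        split_ifs <;> omega
      · rw [List.Chain', List.isChain_map]
        refine chain'_transfer (P := fun p => Rmat n N p.1 p.2 = 0) ?_ L hval hchain
        intro p q hp hq hstep
        have hcp := Rmat_zero hp
        have hcq := Rmat_zero hq
        rw [← hA, ← hC, ← hH, ← hK] at hcp hcq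
        have hip := p.1.isLt; have hjp := p.2.isLt
        have hiq := q.1.isLt; have hjq := q.2.isLt
        have hst : (p.1.1 = q.1.1 ∧ p.2.1 < q.2.1) ∨ (p.2.1 = q.2.1 ∧ p.1.1 < q.1.1) := by
          rcases hstep with ⟨h1, h2⟩ | ⟨h1, h2⟩
          · exact Or.inl ⟨congrArg Fin.val h1, Fin.lt_def.mp h2⟩
          · exact Or.inr ⟨congrArg Fin.val h1, Fin.lt_def.mp h2⟩
        clear hA hC hH hK hN
        simp only [hφ]
        split_ifs <;> omega
    · -- 1-staircase
      set φ : Fin n × Fin N → ℕ := fun p =>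
        if H ≤ p.1.1
        then p.1.1 + p.2.1 + 1 - (n + A)
        else if N ≤ p.1.1 + p.2.1 + C
          then p.1.1 + p.2.1 - K
          else p.1.1 + p.2.1 with hφ
      have hlen := nat_list_len (L.map φ) 0 K ?_ ?_
      · simpa using hlen
      · intro x hx
        rw [List.mem_map] at hx
        obtain ⟨p, hp, rfl⟩ := hx
        have hc := Rmat_one (hval p hp)
        rw [← hA, ← hC, ← hH, ← hK] at hc
        have hi := p.1.isLt; have hj := p.2.isLt
        clear hA hC hH hK hN
        simp only [hφ]
        split_ifs <;> omega
      · rw [List.Chain', List.isChain_map]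
        refine chain'_transfer (P := fun p => Rmat n N p.1 p.2 = 1) ?_ L hval hchain
        intro p q hp hq hstep
        have hcp := Rmat_one hp
        have hcq := Rmat_one hq
        rw [← hA, ← hC, ← hH, ← hK] at hcp hcq
        have hip := p.1.isLt; have hjp := p.2.isLt
        have hiq := q.1.isLt; have hjq := q.2.isLt
        have hst : (p.1.1 = q.1.1 ∧ p.2.1 < q.2.1) ∨ (p.2.1 = q.2.1 ∧ p.1.1 < q.1.1) := by
          rcases hstep with ⟨h1, h2⟩ | ⟨h1, h2⟩
          · exact Or.inl ⟨congrArg Fin.val h1, Fin.lt_def.mp h2⟩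
          · exact Or.inr ⟨congrArg Fin.val h1, Fin.lt_def.mp h2⟩
        clear hA hC hH hK hN
        simp only [hφ]
        split_ifs <;> omega
  refine ⟨⟨hmem, hub⟩, ?_⟩
  have hst : stMax (Rmat n N) = K := IsGreatest.csSup_eq ⟨hmem, hub⟩
  exact Nat.sInf_le ⟨Rmat n N, hst⟩
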